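/- Let 0 < a < b and define ρ : (a,b) → ℝ by ρ(r) = −(log r − log b)²/log(a/b) − log b + Σ_{m=1}^∞ (1/m)·(r^{2m} − 2a^{2m} + (ab)^{2m} r^{−2m})/(b^{2m} − a^{2m}). Then ρ is differentiable on (a,b) and for every r ∈ (a,b), (1/2)ρ'(r) = −(log(r/b)/log(a/b))·(1/r) + Σ_{m=1}^∞ (r^{2m−1} − (ab)^{2m} r^{−2m−1})/(b^{2m} − a^{2m}). -/

import Mathlib

open Real

/-- The Robin function of the annulus `{a < |x| < b}` as a function of the
modulus `r` of its argument. -/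
noncomputable def robinRadial (a b r : ℝ) : ℝ :=
  -(Real.log r - Real.log b) ^ 2 / Real.log (a / b) - Real.log b
  + ∑' m : ℕ, (1 / (m + 1 : ℝ)) *
      ((r ^ (2 * (m + 1)) - 2 * a ^ (2 * (m + 1)) + (a * b) ^ (2 * (m + 1)) *
        (r ^ (2 * (m + 1)))⁻¹) / (b ^ (2 * (m + 1)) - a ^ (2 * (m + 1))))

/-- the `m`-th summand of the series defining `robinRadial`. -/
noncomputable def robinTerm (a b : ℝ) (m : ℕ) (y : ℝ) : ℝ :=
  (1 / (m + 1 : ℝ)) *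
      ((y ^ (2 * (m + 1)) - 2 * a ^ (2 * (m + 1)) + (a * b) ^ (2 * (m + 1)) *
        (y ^ (2 * (m + 1)))⁻¹) / (b ^ (2 * (m + 1)) - a ^ (2 * (m + 1))))

/-- the derivative of `robinTerm`. -/
noncomputable def robinTerm' (a b : ℝ) (m : ℕ) (y : ℝ) : ℝ :=
  2 * ((y ^ (2 * m + 1) - (a * b) ^ (2 * (m + 1)) *
        (y ^ (2 * m + 3))⁻¹) / (b ^ (2 * (m + 1)) - a ^ (2 * (m + 1))))

lemma robinRadial_eq (a b : ℝ) : robinRadial a b = fun y =>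
    (-(Real.log y - Real.log b) ^ 2 / Real.log (a / b) - Real.log b)
      + ∑' m, robinTerm a b m y := rfl

lemma term_hasDerivAt (a b x : ℝ) (hx : 0 < x) (m : ℕ) :
    HasDerivAt (robinTerm a b m) (robinTerm' a b m x) x := by
  have hx0 : x ≠ 0 := hx.ne'
  have hxn : x ^ (2 * (m + 1)) ≠ 0 := pow_ne_zero _ hx0
  have h1 : HasDerivAt (fun y : ℝ => y ^ (2 * (m + 1)))
      ((2 * (m + 1) : ℕ) * x ^ (2 * (m + 1) - 1)) x := hasDerivAt_pow _ x
  have h2 := h1.inv hxn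
  have h3 := ((h1.sub_const (2 * a ^ (2 * (m + 1)))).add
      (h2.const_mul ((a * b) ^ (2 * (m + 1))))).div_const
      (b ^ (2 * (m + 1)) - a ^ (2 * (m + 1)))
  have h4 := h3.const_mul (1 / (m + 1 : ℝ))
  unfold robinTerm robinTerm'
  convert h4 using 1
  case e'_4 => rfl
  case e'_5 => rfl
  case e'_8 => rfl
  have he : 2 * (m + 1) - 1 = 2 * m + 1 := by omega
  rw [he, ← mul_div_assoc, ← mul_div_assoc]
  congr 1
  have hm : (m + 1 : ℝ) ≠ 0 := by positivity
  push_cast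
  field_simp
  ring

/-- lower bound for the denominator -/
lemma denom_lb (a b : ℝ) (ha : 0 < a) (hab : a < b) (m : ℕ) :
    b ^ (2 * m) * (b ^ 2 - a ^ 2) ≤ b ^ (2 * (m + 1)) - a ^ (2 * (m + 1)) := by
  have hb : 0 < b := ha.trans hab
  have hpow : a ^ (2 * m) ≤ b ^ (2 * m) := pow_le_pow_left₀ ha.le hab.le _
  have h1 : a ^ (2 * m) * a ^ 2 ≤ b ^ (2 * m) * a ^ 2 := by nlinarith [sq_nonneg a]
  calc b ^ (2 * m) * (b ^ 2 - a ^ 2)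
      = b ^ (2 * m) * b ^ 2 - b ^ (2 * m) * a ^ 2 := by ring
    _ ≤ b ^ (2 * m) * b ^ 2 - a ^ (2 * m) * a ^ 2 := by linarith
    _ = b ^ (2 * (m + 1)) - a ^ (2 * (m + 1)) := by ring

/-- Let `0 < a < b` and let `ρ(r)` be the radial Robin function of the annulus
`{a < |x| < b}`.  Then `ρ` is differentiable on `(a, b)` and for every `r ∈ (a, b)`,
`(1/2)ρ'(r) = -(log(r/b)/log(a/b))·(1/r)
  + Σ_{m≥1} (r^{2m-1} - (ab)^{2m} r^{-2m-1})/(b^{2m} - a^{2m})`. -/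
theorem robin_radial_derivative (a b : ℝ) (ha : 0 < a) (hab : a < b) :
    ∀ r ∈ Set.Ioo a b,
      DifferentiableAt ℝ (robinRadial a b) r ∧
      (1 / 2) * deriv (robinRadial a b) r =
        -(Real.log (r / b) / Real.log (a / b)) * (1 / r)
        + ∑' m : ℕ, (r ^ (2 * m + 1) - (a * b) ^ (2 * (m + 1)) * (r ^ (2 * m + 3))⁻¹) /
            (b ^ (2 * (m + 1)) - a ^ (2 * (m + 1))) := by
  rintro r ⟨har, hrb⟩
  have hr0 : 0 < r := ha.trans har
  have hb0 : 0 < b := hr0.trans hrb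
  have hba : 0 < b ^ 2 - a ^ 2 := by nlinarith
  obtain ⟨a', haa', ha'r⟩ : ∃ a', a < a' ∧ a' < r :=
    ⟨(a + r) / 2, by linarith, by linarith⟩
  obtain ⟨b', hrb', hb'b⟩ : ∃ b', r < b' ∧ b' < b :=
    ⟨(r + b) / 2, by linarith, by linarith⟩
  have ha'0 : 0 < a' := ha.trans haa'
  have hb'0 : 0 < b' := hr0.trans hrb'
  set u : ℕ → ℝ := fun m => (2 / (b ^ 2 - a ^ 2)) *
      (b' * ((b' / b) ^ 2) ^ m + (a ^ 2 * b ^ 2 / a' ^ 3) * ((a / a') ^ 2) ^ m) with hu'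
  have hq1 : (b' / b) ^ 2 < 1 := by
    rw [div_pow, div_lt_one (by positivity)]
    exact pow_lt_pow_left₀ hb'b hb'0.le two_ne_zero
  have hq2 : (a / a') ^ 2 < 1 := by
    rw [div_pow, div_lt_one (by positivity)]
    exact pow_lt_pow_left₀ haa' ha.le two_ne_zero
  have hu : Summable u := by
    apply Summable.mul_left
    exact ((summable_geometric_of_lt_one (by positivity) hq1).mul_left _).add
      ((summable_geometric_of_lt_one (by positivity) hq2).mul_left _)
  -- bound on the derivatives on Ioo a' b'
  have hbound : ∀ m : ℕ, ∀ y ∈ Set.Ioo a' b', ‖robinTerm' a b m y‖ ≤ u m := by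
    rintro m y ⟨hy1, hy2⟩
    have hy0 : 0 < y := ha'0.trans hy1
    have hDlb := denom_lb a b ha hab m
    have hDlb0 : 0 < b ^ (2 * m) * (b ^ 2 - a ^ 2) := by positivity
    have hD0 : 0 < b ^ (2 * (m + 1)) - a ^ (2 * (m + 1)) := lt_of_lt_of_le hDlb0 hDlb
    have hnum : |y ^ (2 * m + 1) - (a * b) ^ (2 * (m + 1)) * (y ^ (2 * m + 3))⁻¹| ≤
        y ^ (2 * m + 1) + (a * b) ^ (2 * (m + 1)) * (y ^ (2 * m + 3))⁻¹ := by
      have h1 : 0 < y ^ (2 * m + 1) := by positivity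
      have h2 : 0 < (a * b) ^ (2 * (m + 1)) * (y ^ (2 * m + 3))⁻¹ := by positivity
      rw [abs_le]; constructor <;> linarith
    have step1 : ‖robinTerm' a b m y‖ ≤ 2 * ((y ^ (2 * m + 1) + (a * b) ^ (2 * (m + 1)) *
        (y ^ (2 * m + 3))⁻¹) / (b ^ (2 * m) * (b ^ 2 - a ^ 2))) := by
      unfold robinTerm'
      rw [Real.norm_eq_abs, abs_mul, abs_two, abs_div, abs_of_pos hD0]
      gcongr
    have step2 : 2 * ((y ^ (2 * m + 1) + (a * b) ^ (2 * (m + 1)) *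
        (y ^ (2 * m + 3))⁻¹) / (b ^ (2 * m) * (b ^ 2 - a ^ 2))) ≤
        2 * ((b' ^ (2 * m + 1) + (a * b) ^ (2 * (m + 1)) *
        (a' ^ (2 * m + 3))⁻¹) / (b ^ (2 * m) * (b ^ 2 - a ^ 2))) := by
      gcongr
    have step3 : 2 * ((b' ^ (2 * m + 1) + (a * b) ^ (2 * (m + 1)) *
        (a' ^ (2 * m + 3))⁻¹) / (b ^ (2 * m) * (b ^ 2 - a ^ 2))) = u m := by
      simp only [hu']
      have e1 : ((b' / b) ^ 2) ^ m = b' ^ (2 * m) / b ^ (2 * m) := by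
        rw [div_pow, div_pow, ← pow_mul, ← pow_mul]
      have e2 : ((a / a') ^ 2) ^ m = a ^ (2 * m) / a' ^ (2 * m) := by
        rw [div_pow, div_pow, ← pow_mul, ← pow_mul]
      rw [e1, e2]
      field_simp
      ring
    linarith [step1, step2, le_of_eq step3]
  -- summability of f at r
  have hf0 : Summable fun m => robinTerm a b m r := by
    set v : ℕ → ℝ := fun m => (1 / (b ^ 2 - a ^ 2)) *
        (r ^ 2 * ((r / b) ^ 2) ^ m + 2 * a ^ 2 * ((a / b) ^ 2) ^ m +
          (a ^ 2 * b ^ 2 / r ^ 2) * ((a / r) ^ 2) ^ m) with hv'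
    have hq3 : (r / b) ^ 2 < 1 := by
      rw [div_pow, div_lt_one (by positivity)]
      exact pow_lt_pow_left₀ hrb hr0.le two_ne_zero
    have hq4 : (a / b) ^ 2 < 1 := by
      rw [div_pow, div_lt_one (by positivity)]
      exact pow_lt_pow_left₀ hab ha.le two_ne_zero
    have hq5 : (a / r) ^ 2 < 1 := by
      rw [div_pow, div_lt_one (by positivity)]
      exact pow_lt_pow_left₀ har ha.le two_ne_zero
    have hv : Summable v := by
      apply Summable.mul_left
      exact (((summable_geometric_of_lt_one (by positivity) hq3).mul_left _).add
        ((summable_geometric_of_lt_one (by positivity) hq4).mul_left _)).add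
        ((summable_geometric_of_lt_one (by positivity) hq5).mul_left _)
    apply Summable.of_norm_bounded hv
    intro m
    have hDlb := denom_lb a b ha hab m
    have hDlb0 : 0 < b ^ (2 * m) * (b ^ 2 - a ^ 2) := by positivity
    have hD0 : 0 < b ^ (2 * (m + 1)) - a ^ (2 * (m + 1)) := lt_of_lt_of_le hDlb0 hDlb
    have hnum : |r ^ (2 * (m + 1)) - 2 * a ^ (2 * (m + 1)) + (a * b) ^ (2 * (m + 1)) *
        (r ^ (2 * (m + 1)))⁻¹| ≤ r ^ (2 * (m + 1)) + 2 * a ^ (2 * (m + 1)) +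
        (a * b) ^ (2 * (m + 1)) * (r ^ (2 * (m + 1)))⁻¹ := by
      have h1 : 0 < r ^ (2 * (m + 1)) := by positivity
      have h2 : 0 < a ^ (2 * (m + 1)) := by positivity
      have h3 : 0 < (a * b) ^ (2 * (m + 1)) * (r ^ (2 * (m + 1)))⁻¹ := by positivity
      rw [abs_le]; constructor <;> linarith
    have hm1 : (0:ℝ) < 1 / (m + 1) := by positivity
    have hmle : (1 : ℝ) / (m + 1) ≤ 1 := by
      rw [div_le_one (by positivity)]
      linarith [Nat.cast_nonneg (α := ℝ) m]
    have step1 : ‖robinTerm a b m r‖ ≤ (r ^ (2 * (m + 1)) + 2 * a ^ (2 * (m + 1)) +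
        (a * b) ^ (2 * (m + 1)) * (r ^ (2 * (m + 1)))⁻¹) / (b ^ (2 * m) * (b ^ 2 - a ^ 2)) := by
      unfold robinTerm
      rw [Real.norm_eq_abs, abs_mul, abs_of_pos hm1, abs_div, abs_of_pos hD0]
      calc (1 / (m + 1 : ℝ)) * (|r ^ (2 * (m + 1)) - 2 * a ^ (2 * (m + 1)) +
            (a * b) ^ (2 * (m + 1)) * (r ^ (2 * (m + 1)))⁻¹| /
            (b ^ (2 * (m + 1)) - a ^ (2 * (m + 1))))
          ≤ 1 * ((r ^ (2 * (m + 1)) + 2 * a ^ (2 * (m + 1)) +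
            (a * b) ^ (2 * (m + 1)) * (r ^ (2 * (m + 1)))⁻¹) /
            (b ^ (2 * m) * (b ^ 2 - a ^ 2))) := by
            gcongr
        _ = _ := by rw [one_mul]
    have step2 : (r ^ (2 * (m + 1)) + 2 * a ^ (2 * (m + 1)) +
        (a * b) ^ (2 * (m + 1)) * (r ^ (2 * (m + 1)))⁻¹) / (b ^ (2 * m) * (b ^ 2 - a ^ 2))
        = v m := by
      simp only [hv']
      have e1 : ((r / b) ^ 2) ^ m = r ^ (2 * m) / b ^ (2 * m) := by
        rw [div_pow, div_pow, ← pow_mul, ← pow_mul]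
      have e2 : ((a / b) ^ 2) ^ m = a ^ (2 * m) / b ^ (2 * m) := by
        rw [div_pow, div_pow, ← pow_mul, ← pow_mul]
      have e3 : ((a / r) ^ 2) ^ m = a ^ (2 * m) / r ^ (2 * m) := by
        rw [div_pow, div_pow, ← pow_mul, ← pow_mul]
      rw [e1, e2, e3]
      field_simp
      ring
    rw [← step2]; exact step1
  -- the derivative of the series
  have hrmem : r ∈ Set.Ioo a' b' := ⟨ha'r, hrb'⟩
  have hS : HasDerivAt (fun y => ∑' m, robinTerm a b m y) (∑' m, robinTerm' a b m r) r :=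
    hasDerivAt_tsum_of_isPreconnected hu isOpen_Ioo isPreconnected_Ioo
      (fun m y hy => term_hasDerivAt a b y (ha'0.trans hy.1) m)
      (fun m y hy => hbound m y hy) hrmem hf0 hrmem
  -- the derivative of the logarithmic part
  have hlog1 : HasDerivAt (fun y : ℝ => Real.log y - Real.log b) r⁻¹ r :=
    (Real.hasDerivAt_log hr0.ne').sub_const _
  have hlog2 := hlog1.pow 2
  have hG : HasDerivAt (fun y : ℝ => -(Real.log y - Real.log b) ^ 2 / Real.log (a / b)
        - Real.log b)
      (-((2 : ℕ) * (Real.log r - Real.log b) ^ (2 - 1) * r⁻¹) / Real.log (a / b)) r :=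
    (hlog2.neg.div_const _).sub_const _
  have htot : HasDerivAt (robinRadial a b)
      (-((2 : ℕ) * (Real.log r - Real.log b) ^ (2 - 1) * r⁻¹) / Real.log (a / b)
        + ∑' m, robinTerm' a b m r) r := by
    rw [robinRadial_eq]
    exact hG.add hS
  refine ⟨htot.differentiableAt, ?_⟩
  rw [htot.deriv]
  have htsum : (∑' m, robinTerm' a b m r) = 2 * ∑' m : ℕ,
      (r ^ (2 * m + 1) - (a * b) ^ (2 * (m + 1)) * (r ^ (2 * m + 3))⁻¹) /
        (b ^ (2 * (m + 1)) - a ^ (2 * (m + 1))) := by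
    unfold robinTerm'
    exact tsum_mul_left
  rw [htsum, Real.log_div hr0.ne' hb0.ne']
  push_cast
  ring
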